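/- Under the hypotheses of the previous statement but with x ↦ g(x,λ) strictly decreasing on [c,d] for each λ, the function λ ↦ h(x,λ) = (∫_x^d f(y,λ) dy)/(∫_c^x f(y,λ) dy) is strictly decreasing on Λ for every x ∈ (c,d). -/

import Mathlib

open Set intervalIntegral

theorem monotone_ratio_decreasing (c d : ℝ) (hcd : c < d)
    (Λ : Set ℝ) (hΛ : Λ.OrdConnected)
    (f g : ℝ → ℝ → ℝ)
    (hf_cont : ContinuousOn (fun p : ℝ × ℝ => f p.1 p.2) (Icc c d ×ˢ Λ))
    (hf_pos : ∀ x ∈ Icc c d, ∀ l ∈ Λ, 0 < f x l)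
    (hf_deriv : ∀ x ∈ Icc c d, ∀ l ∈ Λ,
      HasDerivWithinAt (fun t => f x t) (f x l * g x l) Λ l)
    (hderiv_cont : ContinuousOn (fun p : ℝ × ℝ => f p.1 p.2 * g p.1 p.2) (Icc c d ×ˢ Λ))
    (hg_mono : ∀ l ∈ Λ, StrictAntiOn (fun x => g x l) (Icc c d)) :
    ∀ x ∈ Ioo c d,
      StrictAntiOn (fun l => (∫ y in x..d, f y l) / (∫ y in c..x, f y l)) Λ := by
  intro x hx l1 hl1 l2 hl2 hl
  obtain ⟨hcx, hxd⟩ := hx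
  have hxmem : x ∈ Icc c d := ⟨hcx.le, hxd.le⟩
  have hIccΛ : Icc l1 l2 ⊆ Λ := hΛ.out hl1 hl2
  -- continuity in x for fixed l
  have hf_contx : ∀ l ∈ Λ, ContinuousOn (fun y => f y l) (Icc c d) := by
    intro l hll
    have hc : Continuous (fun y : ℝ => ((y, l) : ℝ × ℝ)) := by fun_prop
    exact hf_cont.comp hc.continuousOn (fun y hy => ⟨hy, hll⟩)
  -- continuity in l for fixed w
  have hf_contl : ∀ w ∈ Icc c d, ContinuousOn (fun t => f w t) Λ := by
    intro w hw
    have hc : Continuous (fun t : ℝ => ((w, t) : ℝ × ℝ)) := by fun_prop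
    exact hf_cont.comp hc.continuousOn (fun t ht => ⟨hw, ht⟩)
  have hfg_contl : ∀ w ∈ Icc c d, ContinuousOn (fun t => f w t * g w t) Λ := by
    intro w hw
    have hc : Continuous (fun t : ℝ => ((w, t) : ℝ × ℝ)) := by fun_prop
    exact hderiv_cont.comp hc.continuousOn (fun t ht => ⟨hw, ht⟩)
  have hg_contl : ∀ w ∈ Icc c d, ContinuousOn (fun t => g w t) Λ := by
    intro w hw
    have := (hfg_contl w hw).div (hf_contl w hw) (fun t ht => (hf_pos w hw t ht).ne')
    refine this.congr ?_
    intro t ht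
    simp only [Pi.div_apply]
    field_simp [(hf_pos w hw t ht).ne']
  -- log f has derivative g within Λ
  have hlog_deriv : ∀ w ∈ Icc c d, ∀ t ∈ Λ,
      HasDerivWithinAt (fun s => Real.log (f w s)) (g w t) Λ t := by
    intro w hw t ht
    have h1 := (Real.hasDerivAt_log (hf_pos w hw t ht).ne').comp_hasDerivWithinAt t
      (hf_deriv w hw t ht)
    have : (f w t)⁻¹ * (f w t * g w t) = g w t := by
      field_simp [(hf_pos w hw t ht).ne']
    rwa [this] at h1
  -- FTC: log f w l2 - log f w l1 = ∫ g w t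
  have hftc : ∀ w ∈ Icc c d,
      ∫ t in l1..l2, g w t = Real.log (f w l2) - Real.log (f w l1) := by
    intro w hw
    apply integral_eq_sub_of_hasDeriv_right_of_le hl.le
    · exact ContinuousOn.comp Real.continuousOn_log ((hf_contl w hw).mono hIccΛ)
        (fun t ht => (hf_pos w hw t (hIccΛ ht)).ne')
    · intro t ht
      exact (hlog_deriv w hw t (hIccΛ ⟨ht.1.le, ht.2.le⟩)).mono_of_mem_nhdsWithin
        (Filter.mem_of_superset (Ioc_mem_nhdsGT_of_mem ⟨le_rfl, ht.2⟩)
          (fun s hs => hIccΛ ⟨ht.1.le.trans hs.1.le, hs.2⟩))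
    · exact (((hg_contl w hw).mono hIccΛ).mono (by rw [uIcc_of_le hl.le])).intervalIntegrable
  -- integral of g strictly anti in w
  have hint_anti : ∀ w1 ∈ Icc c d, ∀ w2 ∈ Icc c d, w1 < w2 →
      (∫ t in l1..l2, g w2 t) < ∫ t in l1..l2, g w1 t := by
    intro w1 hw1 w2 hw2 hw
    have hsub : (0:ℝ) < ∫ t in l1..l2, (g w1 t - g w2 t) := by
      apply intervalIntegral_pos_of_pos_on
      · exact ((((hg_contl w1 hw1).sub (hg_contl w2 hw2)).mono hIccΛ).mono
          (by rw [uIcc_of_le hl.le])).intervalIntegrable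
      · intro t ht
        have := hg_mono t (hIccΛ ⟨ht.1.le, ht.2.le⟩) hw1 hw2 hw
        simpa [sub_pos] using this
      · exact hl
    have hi1 : IntervalIntegrable (fun t => g w1 t) MeasureTheory.volume l1 l2 :=
      (((hg_contl w1 hw1).mono hIccΛ).mono (by rw [uIcc_of_le hl.le])).intervalIntegrable
    have hi2 : IntervalIntegrable (fun t => g w2 t) MeasureTheory.volume l1 l2 :=
      (((hg_contl w2 hw2).mono hIccΛ).mono (by rw [uIcc_of_le hl.le])).intervalIntegrable
    rw [integral_sub hi1 hi2] at hsub
    linarith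
  -- ratio r w = f w l2 / f w l1 strictly anti
  have hr_anti : ∀ w1 ∈ Icc c d, ∀ w2 ∈ Icc c d, w1 < w2 →
      f w2 l2 / f w2 l1 < f w1 l2 / f w1 l1 := by
    intro w1 hw1 w2 hw2 hw
    have h1 := hftc w1 hw1
    have h2 := hftc w2 hw2
    have := hint_anti w1 hw1 w2 hw2 hw
    rw [h1, h2] at this
    have hp1 := hf_pos w1 hw1 l1 hl1
    have hp2 := hf_pos w1 hw1 l2 hl2
    have hp3 := hf_pos w2 hw2 l1 hl1
    have hp4 := hf_pos w2 hw2 l2 hl2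
    rw [← Real.log_div hp2.ne' hp1.ne', ← Real.log_div hp4.ne' hp3.ne'] at this
    exact (Real.log_lt_log_iff (by positivity) (by positivity)).mp this
  set K := f x l2 / f x l1 with hK
  have hKpos : 0 < K := div_pos (hf_pos x hxmem l2 hl2) (hf_pos x hxmem l1 hl1)
  -- pointwise bounds
  have hub : ∀ y ∈ Icc x d, f y l2 ≤ K * f y l1 := by
    intro y hy
    have hymem : y ∈ Icc c d := ⟨hcx.le.trans hy.1, hy.2⟩
    have hp1 := hf_pos y hymem l1 hl1
    rcases eq_or_lt_of_le hy.1 with h | h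
    · subst h; rw [hK, div_mul_cancel₀ _ hp1.ne']
    · have := hr_anti x hxmem y hymem h
      calc f y l2 = (f y l2 / f y l1) * f y l1 := by field_simp
        _ ≤ K * f y l1 := by nlinarith [this]
  have hub_strict : ∀ y ∈ Ioo x d, f y l2 < K * f y l1 := by
    intro y hy
    have hymem : y ∈ Icc c d := ⟨hcx.le.trans hy.1.le, hy.2.le⟩
    have hp1 := hf_pos y hymem l1 hl1
    have := hr_anti x hxmem y hymem hy.1
    calc f y l2 = (f y l2 / f y l1) * f y l1 := by field_simp
      _ < K * f y l1 := by nlinarith [this]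
  have hlb : ∀ z ∈ Icc c x, K * f z l1 ≤ f z l2 := by
    intro z hz
    have hzmem : z ∈ Icc c d := ⟨hz.1, hz.2.trans hxd.le⟩
    have hp1 := hf_pos z hzmem l1 hl1
    rcases eq_or_lt_of_le hz.2 with h | h
    · subst h; rw [hK, div_mul_cancel₀ _ hp1.ne']
    · have := hr_anti z hzmem x hxmem h
      calc K * f z l1 ≤ (f z l2 / f z l1) * f z l1 := by nlinarith [this]
        _ = f z l2 := by field_simp
  have hlb_strict : ∀ z ∈ Ioo c x, K * f z l1 < f z l2 := by
    intro z hz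
    have hzmem : z ∈ Icc c d := ⟨hz.1.le, hz.2.le.trans hxd.le⟩
    have hp1 := hf_pos z hzmem l1 hl1
    have := hr_anti z hzmem x hxmem hz.2
    calc K * f z l1 < (f z l2 / f z l1) * f z l1 := by nlinarith [this]
      _ = f z l2 := by field_simp
  -- integrability
  have hint : ∀ l ∈ Λ, ∀ a ∈ Icc c d, ∀ b ∈ Icc c d,
      IntervalIntegrable (fun y => f y l) MeasureTheory.volume a b := by
    intro l hll a ha b hb
    exact (((hf_contx l hll).mono (uIcc_subset_Icc ha hb))).intervalIntegrable
  -- the four integrals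
  set N1 := ∫ y in x..d, f y l1 with hN1
  set N2 := ∫ y in x..d, f y l2 with hN2
  set D1 := ∫ y in c..x, f y l1 with hD1
  set D2 := ∫ y in c..x, f y l2 with hD2
  have hcd' : c ∈ Icc c d := ⟨le_rfl, hcd.le⟩
  have hdd' : d ∈ Icc c d := ⟨hcd.le, le_rfl⟩
  have hN1pos : 0 < N1 := by
    apply intervalIntegral_pos_of_pos_on (hint l1 hl1 x hxmem d hdd')
    · intro y hy; exact hf_pos y ⟨hcx.le.trans hy.1.le, hy.2.le⟩ l1 hl1
    · exact hxd
  have hD1pos : 0 < D1 := by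
    apply intervalIntegral_pos_of_pos_on (hint l1 hl1 c hcd' x hxmem)
    · intro y hy; exact hf_pos y ⟨hy.1.le, hy.2.le.trans hxd.le⟩ l1 hl1
    · exact hcx
  have hN2lt : N2 < K * N1 := by
    have hpos : (0:ℝ) < ∫ y in x..d, (K * f y l1 - f y l2) := by
      apply intervalIntegral_pos_of_pos_on
      · exact ((hint l1 hl1 x hxmem d hdd').const_mul K).sub (hint l2 hl2 x hxmem d hdd')
      · intro y hy
        have := hub_strict y hy
        linarith
      · exact hxd
    rw [integral_sub ((hint l1 hl1 x hxmem d hdd').const_mul K) (hint l2 hl2 x hxmem d hdd'),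
      integral_const_mul] at hpos
    simp only [← hN1, ← hN2] at hpos
    linarith
  have hD2gt : K * D1 < D2 := by
    have hpos : (0:ℝ) < ∫ y in c..x, (f y l2 - K * f y l1) := by
      apply intervalIntegral_pos_of_pos_on
      · exact (hint l2 hl2 c hcd' x hxmem).sub ((hint l1 hl1 c hcd' x hxmem).const_mul K)
      · intro y hy
        have := hlb_strict y hy
        linarith
      · exact hcx
    rw [integral_sub (hint l2 hl2 c hcd' x hxmem) ((hint l1 hl1 c hcd' x hxmem).const_mul K),
      integral_const_mul] at hpos
    simp only [← hD1, ← hD2] at hpos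
    linarith
  have hN2pos : 0 ≤ N2 := by
    apply intervalIntegral.integral_nonneg hxd.le
    intro y hy; exact (hf_pos y ⟨hcx.le.trans hy.1, hy.2⟩ l2 hl2).le
  have hD2pos : 0 < D2 := lt_trans (by positivity) hD2gt
  show N2 / D2 < N1 / D1
  rw [div_lt_div_iff₀ hD2pos hD1pos]
  calc N2 * D1 < (K * N1) * D1 := by nlinarith
    _ = N1 * (K * D1) := by ring
    _ ≤ N1 * D2 := by nlinarith
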